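/- Let G ≅ ℤ_p² = H × Γ with H, Γ ≅ ℤ_p, let Λ(G) = ℤ_p[[T₁,T₂]] and Λ(Γ) = ℤ_p[[T₂]] with the surjection Λ(G) → Λ(Γ) sending T₁ to 0. Let M be a finitely generated Λ(G)-module such that M/T₁M is a finitely generated torsion Λ(Γ)-module. Then M is a torsion Λ(G)-module. -/

import Mathlib

open Finset

section aux
open MvPowerSeries in

lemma aux_X_prime {σ : Type*} [DecidableEq σ] {R : Type*} [CommRing R] [IsDomain R] (t : σ) :
    Prime (X t : MvPowerSeries σ R) := by
  classical
  refine ⟨?_, ?_, ?_⟩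
  · intro h0
    have := congrArg (coeff (Finsupp.single t 1)) h0
    simp [coeff_X] at this
  · intro hu
    have := hu.map (constantCoeff (σ := σ) (R := R))
    rw [constantCoeff_X] at this
    exact not_isUnit_zero this
  · intro a b hab
    by_contra hcon
    rw [not_or] at hcon
    obtain ⟨ha, hb⟩ := hcon
    rw [X_dvd_iff] at ha hb hab
    push_neg at ha hb
    obtain ⟨da, hda0, hda⟩ := ha
    obtain ⟨db, hdb0, hdb⟩ := hb
    set A : MvPowerSeries σ R := fun d => if d t = 0 then coeff d a else 0 with hAdef
    set B : MvPowerSeries σ R := fun d => if d t = 0 then coeff d b else 0 with hBdef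
    have hcA : ∀ d, coeff d A = if d t = 0 then coeff d a else 0 := fun d => rfl
    have hcB : ∀ d, coeff d B = if d t = 0 then coeff d b else 0 := fun d => rfl
    have hA : A ≠ 0 := by
      intro h0
      apply hda
      have := congrArg (coeff da) h0
      rwa [hcA, if_pos hda0, map_zero] at this
    have hB : B ≠ 0 := by
      intro h0
      apply hdb
      have := congrArg (coeff db) h0
      rwa [hcB, if_pos hdb0, map_zero] at this
    have hAB : A * B = 0 := by
      ext d
      rw [map_zero, coeff_mul]
      by_cases hd : d t = 0
      · have : ∀ q ∈ Finset.HasAntidiagonal.antidiagonal d,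
            coeff q.1 A * coeff q.2 B = coeff q.1 a * coeff q.2 b := by
          intro q hq
          rw [Finset.HasAntidiagonal.mem_antidiagonal] at hq
          have hq' : q.1 t + q.2 t = 0 := by
            have := congrArg (fun f : σ →₀ ℕ => f t) hq
            simp only [Finsupp.add_apply] at this
            omega
          rw [hcA, hcB, if_pos (Nat.eq_zero_of_add_eq_zero_right hq'),
            if_pos (Nat.eq_zero_of_add_eq_zero_left hq')]
        rw [Finset.sum_congr rfl this, ← coeff_mul]
        exact hab d hd
      · apply Finset.sum_eq_zero
        intro q hq
        rw [Finset.HasAntidiagonal.mem_antidiagonal] at hq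
        have hq' : q.1 t + q.2 t = d t := by
          have := congrArg (fun f : σ →₀ ℕ => f t) hq
          simpa using this
        rcases Nat.eq_zero_or_pos (q.1 t) with h1 | h1
        · rw [hcB, if_neg (by omega), mul_zero]
        · rw [hcA, if_neg (by omega), zero_mul]
    exact mul_ne_zero hA hB hAB

lemma aux_det_smul {R : Type*} [CommRing R] {M : Type*} [AddCommGroup M] [Module R M]
    {n : ℕ} (B : Matrix (Fin n) (Fin n) R) (v : Fin n → M)
    (hB : ∀ i, ∑ j, B i j • v j = 0) (i : Fin n) : B.det • v i = 0 := by
  have h1 : B.det • v i = ∑ j, ((B.adjugate * B) i j) • v j := by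
    rw [Matrix.adjugate_mul]
    simp [Matrix.smul_apply, Matrix.one_apply, ite_smul, smul_smul]
  rw [h1]
  have h2 : ∀ j, ((B.adjugate * B) i j) • v j = ∑ k, B.adjugate i k • (B k j • v j) := by
    intro j
    rw [Matrix.mul_apply, Finset.sum_smul]
    simp [mul_smul]
  simp_rw [h2]
  rw [Finset.sum_comm]
  simp_rw [← Finset.smul_sum]
  simp [hB]
end aux

/-- Let `Λ(G) = ℤ_p[[T₁, T₂]]` and `Λ(Γ) = ℤ_p[[T₂]] = Λ(G)/(T₁)`.
If `M` is a finitely generated `Λ(G)`-module such that the coinvariants `M/T₁M` form a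
torsion `Λ(Γ)`-module (every element is killed by some element not in `(T₁)`), then `M`
is a torsion `Λ(G)`-module. -/
theorem statement16 (p : ℕ) [Fact p.Prime]
    (M : Type) [AddCommGroup M] [Module (MvPowerSeries (Fin 2) ℤ_[p]) M]
    [Module.Finite (MvPowerSeries (Fin 2) ℤ_[p]) M]
    (h : ∀ x : M ⧸ (Ideal.span {(MvPowerSeries.X (0 : Fin 2) : MvPowerSeries (Fin 2) ℤ_[p])} •
        (⊤ : Submodule (MvPowerSeries (Fin 2) ℤ_[p]) M)),
      ∃ r : MvPowerSeries (Fin 2) ℤ_[p],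
        r ∉ Ideal.span {(MvPowerSeries.X (0 : Fin 2) : MvPowerSeries (Fin 2) ℤ_[p])} ∧
        r • x = 0) :
    ∀ m : M, ∃ r : MvPowerSeries (Fin 2) ℤ_[p], r ≠ 0 ∧ r • m = 0 := by
  classical
  set R : Type := MvPowerSeries (Fin 2) ℤ_[p] with hR
  set X0 : R := MvPowerSeries.X 0 with hX0
  set P : Ideal R := Ideal.span {X0} with hP
  have hX0prime : Prime X0 := aux_X_prime 0
  have hPprime : P.IsPrime := (Ideal.span_singleton_prime hX0prime.ne_zero).mpr hX0prime
  haveI := hPprime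
  obtain ⟨n, v, hv⟩ := Module.Finite.exists_fin (R := R) (M := M)
  have key : ∀ i : Fin n, ∃ r : R, r ∉ P ∧ ∃ y : M, r • v i = X0 • y := by
    intro i
    obtain ⟨r, hr, hr0⟩ := h (Submodule.Quotient.mk (v i))
    refine ⟨r, hr, ?_⟩
    rw [← Submodule.Quotient.mk_smul, Submodule.Quotient.mk_eq_zero,
      Submodule.ideal_span_singleton_smul] at hr0
    rw [← SetLike.mem_coe, Submodule.coe_pointwise_smul] at hr0
    obtain ⟨y, -, hy⟩ := hr0
    exact ⟨y, hy.symm⟩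
  choose r hr y hy using key
  have hy' : ∀ i, ∃ c : Fin n → R, ∑ j, c j • v j = y i := fun i =>
    (Submodule.mem_span_range_iff_exists_fun R).mp (hv ▸ Submodule.mem_top)
  choose a ha using hy'
  set s : R := ∏ k, r k with hs
  set B : Matrix (Fin n) (Fin n) R :=
    fun i j => (if i = j then s else 0) - X0 * ((∏ k ∈ univ.erase i, r k) * a i j) with hB
  have hBv : ∀ i, ∑ j, B i j • v j = 0 := by
    intro i
    have h1 : s • v i = X0 • ((∏ k ∈ univ.erase i, r k) • y i) := by
      have : s = (∏ k ∈ univ.erase i, r k) * r i := by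
        rw [hs, ← Finset.mul_prod_erase univ r (mem_univ i), mul_comm]
      rw [this, mul_smul, hy i, smul_comm]
    have h2 : ∀ j, B i j • v j
        = (if i = j then s else 0) • v j - (X0 * ((∏ k ∈ univ.erase i, r k) * a i j)) • v j := by
      intro j; rw [hB]; simp [sub_smul]
    simp_rw [h2]
    rw [Finset.sum_sub_distrib]
    have h3 : ∑ j, (if i = j then s else 0) • v j = s • v i := by
      simp [ite_smul, Finset.sum_ite_eq]
    have h4 : ∑ j, (X0 * ((∏ k ∈ univ.erase i, r k) * a i j)) • v j
        = X0 • ((∏ k ∈ univ.erase i, r k) • y i) := by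
      simp_rw [mul_smul]
      rw [← Finset.smul_sum, ← Finset.smul_sum, ha i]
    rw [h3, h4, h1, sub_self]
  have hdet_ne : B.det ≠ 0 := by
    intro h0
    set q := Ideal.Quotient.mk P with hq
    have hqdet : q B.det = (q s) ^ n := by
      rw [RingHom.map_det]
      have : q.mapMatrix B = (q s) • (1 : Matrix (Fin n) (Fin n) (R ⧸ P)) := by
        ext i j
        have hqX0 : q X0 = 0 := Ideal.Quotient.eq_zero_iff_mem.mpr
          (Ideal.subset_span (Set.mem_singleton _))
        simp only [RingHom.mapMatrix_apply, Matrix.map_apply]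
        simp only [hB, map_sub, map_mul, hqX0,
          zero_mul, sub_zero, Matrix.smul_apply, Matrix.one_apply, smul_eq_mul, mul_ite,
          mul_one, mul_zero]
        split <;> simp [apply_ite q]
      rw [this, Matrix.det_smul, Matrix.det_one]; simp
    have hqs : q s ≠ 0 := by
      rw [hs, map_prod]
      refine Finset.prod_ne_zero_iff.mpr fun k _ => ?_
      exact fun hk => hr k (Ideal.Quotient.eq_zero_iff_mem.mp hk)
    rw [h0, map_zero] at hqdet
    exact hqs (pow_eq_zero_iff'.mp hqdet.symm).1
  intro m
  refine ⟨B.det, hdet_ne, ?_⟩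
  obtain ⟨c, hc⟩ := (Submodule.mem_span_range_iff_exists_fun R).mp (hv ▸ Submodule.mem_top (x := m))
  rw [← hc, Finset.smul_sum]
  have : ∀ j, B.det • c j • v j = c j • (B.det • v j) := fun j => smul_comm _ _ _
  simp_rw [this, aux_det_smul B v hBv, smul_zero]
  simp
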